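/- For a prime p and positive integer n, the matrix A_{p^n} defined by A_{p^n}(i,j) = p^n·gcd(p^i,p^j)^2/(p^j·gcd(p^{2i},p^n)) for i,j ∈ {0,...,n} is invertible over the rationals, and its inverse is the tridiagonal matrix M with entries p^n·(p − 1/p)·M(i,j) equal to: p if i=j=0 or i=j=n; −p^{min(j, n−j)} if |i−j|=1; p^{min(j−1, n−j−1)}·(p^2+1) if 0<i=j<n; and 0 otherwise. -/

import Mathlib

/-- The order matrix `A_{p^n}` of level `p^n`, with rows and columns indexed by
`i, j ∈ {0, …, n}`: `A_{p^n}(i,j) = p^n · gcd(p^i, p^j)^2 / (p^j · gcd(p^{2i}, p^n))`. -/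
noncomputable def orderMatrix (p n : ℕ) : Matrix (Fin (n + 1)) (Fin (n + 1)) ℚ :=
  Matrix.of fun i j =>
    ((p ^ n * (Nat.gcd (p ^ (i : ℕ)) (p ^ (j : ℕ))) ^ 2 : ℕ) : ℚ) /
      ((p ^ (j : ℕ) * Nat.gcd (p ^ (2 * (i : ℕ))) (p ^ n) : ℕ) : ℚ)

/-- The claimed tridiagonal inverse of `A_{p^n}`: `p^n(p - 1/p) · M(i,j)` equals `p` if
`i = j = 0` or `i = j = n`; `-p^{min(j, n-j)}` if `|i - j| = 1`;
`p^{min(j-1, n-j-1)}·(p^2+1)` if `0 < i = j < n`; and `0` otherwise. -/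
noncomputable def orderMatrixInv (p n : ℕ) : Matrix (Fin (n + 1)) (Fin (n + 1)) ℚ :=
  Matrix.of fun i j =>
    (if (i : ℕ) = j ∧ ((i : ℕ) = 0 ∨ (i : ℕ) = n) then (p : ℚ)
      else if (i : ℕ) + 1 = (j : ℕ) ∨ (j : ℕ) + 1 = (i : ℕ) then
        -(p : ℚ) ^ (min (j : ℕ) (n - (j : ℕ)))
      else if (i : ℕ) = (j : ℕ) then
        (p : ℚ) ^ (min ((j : ℕ) - 1) (n - (j : ℕ) - 1)) * ((p : ℚ) ^ 2 + 1)
      else 0) / ((p : ℚ) ^ n * ((p : ℚ) - 1 / (p : ℚ)))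

lemma gcd_pow_pow (p a b : ℕ) : Nat.gcd (p ^ a) (p ^ b) = p ^ min a b := by
  rcases le_total a b with h | h
  · rw [Nat.gcd_eq_left (pow_dvd_pow p h), min_eq_left h]
  · rw [Nat.gcd_eq_right (pow_dvd_pow p h), min_eq_right h]

def expE (n i j : ℕ) : ℕ := n + 2 * min i j - (j + min (2 * i) n)

lemma entry_eq (p n : ℕ) (hp : 0 < p) (i j : Fin (n + 1)) :
    orderMatrix p n i j = (p : ℚ) ^ expE n (i : ℕ) (j : ℕ) := by
  have hq : (p:ℚ) ≠ 0 := by exact_mod_cast hp.ne'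
  have hle : (j:ℕ) + min (2*(i:ℕ)) n ≤ n + 2 * min (i:ℕ) (j:ℕ) := by
    have h1 := i.isLt; have h2 := j.isLt; omega
  unfold orderMatrix expE
  simp only [Matrix.of_apply]
  rw [gcd_pow_pow, gcd_pow_pow, pow_sub₀ _ hq hle]
  push_cast
  rw [← pow_mul, ← pow_add, ← pow_add]
  rw [div_eq_mul_inv]
  ring_nf

lemma pow_eq_pow_of (q : ℚ) {a b : ℕ} (h : a = b) : q ^ a = q ^ b := by rw [h]

lemma key (p n i k : ℕ) (hp : 0 < p) (hn : 0 < n) (hi : i ≤ n) (hk : k ≤ n) :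
    (p:ℚ) ^ expE n i k *
        (if k = 0 ∨ k = n then (p:ℚ) else (p:ℚ) ^ min (k-1) (n-k-1) * ((p:ℚ)^2 + 1))
      + (if 1 ≤ k then (p:ℚ) ^ expE n i (k-1) * (-(p:ℚ) ^ min k (n-k)) else 0)
      + (if k + 1 ≤ n then (p:ℚ) ^ expE n i (k+1) * (-(p:ℚ) ^ min k (n-k)) else 0)
    = if i = k then (p:ℚ) ^ n * ((p:ℚ) - 1/(p:ℚ)) else 0 := by
  have hq : (p:ℚ) ≠ 0 := by
    have : 0 < (p:ℚ) := by exact_mod_cast hp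
    exact this.ne'
  have hD : (p:ℚ) ^ n * ((p:ℚ) - 1/(p:ℚ)) = (p:ℚ)^(n-1) * ((p:ℚ)^2 - 1) := by
    rw [show n = (n-1)+1 by omega]
    rw [Nat.add_sub_cancel]
    field_simp
    ring
  set q := (p:ℚ) with hqdef
  unfold expE
  rcases eq_or_ne k 0 with rfl | hk0
  · rw [if_pos (Or.inl rfl), if_neg (by omega), if_pos (by omega)]
    rcases eq_or_ne i 0 with rfl | hi0
    · rw [if_pos rfl, hD,
        show n + 2 * min 0 0 - (0 + min (2*0) n) = (n-1)+1 from by omega,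
        show n + 2 * min 0 (0+1) - ((0+1) + min (2*0) n) = n-1 from by omega,
        show min 0 (n-0) = 0 from by omega]
      ring
    · rw [if_neg hi0,
        show n + 2 * min i (0+1) - ((0+1) + min (2*i) n)
          = (n + 2 * min i 0 - (0 + min (2*i) n)) + 1 from by omega,
        show min 0 (n-0) = 0 from by omega]
      ring
  rcases eq_or_ne k n with hkn | hkn
  · rw [if_pos (Or.inr hkn), if_pos (by omega), if_neg (by omega)]
    rcases eq_or_ne i k with rfl | hin
    · rw [if_pos rfl, hD,
        show n + 2 * min i i - (i + min (2*i) n) = (n-1)+1 from by omega,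
        show n + 2 * min i (i-1) - ((i-1) + min (2*i) n) = n-1 from by omega,
        show min i (n-i) = 0 from by omega]
      ring
    · rw [if_neg hin,
        show n + 2 * min i (k-1) - ((k-1) + min (2*i) n)
          = (n + 2 * min i k - (k + min (2*i) n)) + 1 from by omega,
        show min k (n-k) = 0 from by omega]
      ring
  -- now 0 < k < n
  rw [if_neg (by omega), if_pos (by omega), if_pos (by omega)]
  rcases lt_trichotomy i k with hik | rfl | hik
  · rw [if_neg (by omega)]
    have h1 : q ^ (n + 2 * min i (k-1) - ((k-1) + min (2*i) n)) * q ^ min k (n-k)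
        = q ^ (n + 2 * min i k - (k + min (2*i) n)) * q ^ min (k-1) (n-k-1) * q ^ 2 := by
      rw [← pow_add, ← pow_add, ← pow_add]; exact pow_eq_pow_of q (by omega)
    have h3 : q ^ (n + 2 * min i (k+1) - ((k+1) + min (2*i) n)) * q ^ min k (n-k)
        = q ^ (n + 2 * min i k - (k + min (2*i) n)) * q ^ min (k-1) (n-k-1) := by
      rw [← pow_add, ← pow_add]; exact pow_eq_pow_of q (by omega)
    linear_combination -h1 - h3
  · rw [if_pos rfl, hD]
    have h1 : q ^ (n + 2 * min i i - (i + min (2*i) n)) * q ^ min (i-1) (n-i-1)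
        = q ^ (n-1) := by
      rw [← pow_add]; exact pow_eq_pow_of q (by omega)
    have h2 : q ^ (n + 2 * min i (i-1) - ((i-1) + min (2*i) n)) * q ^ min i (n-i)
        = q ^ (n-1) := by
      rw [← pow_add]; exact pow_eq_pow_of q (by omega)
    have h3 : q ^ (n + 2 * min i (i+1) - ((i+1) + min (2*i) n)) * q ^ min i (n-i)
        = q ^ (n-1) := by
      rw [← pow_add]; exact pow_eq_pow_of q (by omega)
    linear_combination (q^2 + 1) * h1 - h2 - h3
  · rw [if_neg (by omega)]
    have h1 : q ^ (n + 2 * min i (k-1) - ((k-1) + min (2*i) n)) * q ^ min k (n-k)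
        = q ^ (n + 2 * min i k - (k + min (2*i) n)) * q ^ min (k-1) (n-k-1) := by
      rw [← pow_add, ← pow_add]; exact pow_eq_pow_of q (by omega)
    have h3 : q ^ (n + 2 * min i (k+1) - ((k+1) + min (2*i) n)) * q ^ min k (n-k)
        = q ^ (n + 2 * min i k - (k + min (2*i) n)) * q ^ min (k-1) (n-k-1) * q ^ 2 := by
      rw [← pow_add, ← pow_add, ← pow_add]; exact pow_eq_pow_of q (by omega)
    linear_combination -h1 - h3

/-- `A_{p^n}` is invertible over `ℚ` with the stated tridiagonal inverse. -/
theorem stmt_1 (p n : ℕ) (hp : p.Prime) (hn : 0 < n) :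
    orderMatrix p n * orderMatrixInv p n = 1 ∧ orderMatrixInv p n * orderMatrix p n = 1 := by
  have hp0 : 0 < p := hp.pos
  have hq0 : (p:ℚ) ≠ 0 := by exact_mod_cast hp0.ne'
  have hq1 : (1:ℚ) < (p:ℚ) := by exact_mod_cast hp.one_lt
  have hD0 : (p:ℚ) ^ n * ((p:ℚ) - 1/(p:ℚ)) ≠ 0 := by
    apply mul_ne_zero (pow_ne_zero _ hq0)
    have : 1/(p:ℚ) < 1 := by
      rw [div_lt_one (by linarith)]; exact hq1
    intro h
    have := sub_eq_zero.mp h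
    linarith
  have h1 : orderMatrix p n * orderMatrixInv p n = 1 := by
    ext i k
    rw [Matrix.mul_apply, Matrix.one_apply]
    simp only [entry_eq p n hp0, orderMatrixInv, Matrix.of_apply]
    simp only [← mul_div_assoc]
    rw [← Finset.sum_div, div_eq_iff hD0]
    set q := (p:ℚ) with hqdef
    set c := -q ^ (min (k:ℕ) (n - (k:ℕ))) with hc
    set d := if (k:ℕ) = 0 ∨ (k:ℕ) = n then q
      else q ^ (min ((k:ℕ)-1) (n-(k:ℕ)-1)) * (q^2 + 1) with hd
    have hf : ∀ j : Fin (n+1),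
        (if (j:ℕ) = (k:ℕ) ∧ ((j:ℕ) = 0 ∨ (j:ℕ) = n) then q
          else if (j:ℕ) + 1 = (k:ℕ) ∨ (k:ℕ) + 1 = (j:ℕ) then
            -q ^ (min (k:ℕ) (n - (k:ℕ)))
          else if (j:ℕ) = (k:ℕ) then
            q ^ (min ((k:ℕ)-1) (n-(k:ℕ)-1)) * (q^2 + 1)
          else 0)
        = (if (j:ℕ) = (k:ℕ) then d else 0) + (if (j:ℕ) + 1 = (k:ℕ) then c else 0)
            + (if (k:ℕ) + 1 = (j:ℕ) then c else 0) := by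
      intro j
      rw [hc, hd]
      split_ifs <;> first | ring1 | (exfalso; omega)
    calc (∑ j : Fin (n+1), q ^ expE n (i:ℕ) (j:ℕ) *
            (if (j:ℕ) = (k:ℕ) ∧ ((j:ℕ) = 0 ∨ (j:ℕ) = n) then q
              else if (j:ℕ) + 1 = (k:ℕ) ∨ (k:ℕ) + 1 = (j:ℕ) then
                -q ^ (min (k:ℕ) (n - (k:ℕ)))
              else if (j:ℕ) = (k:ℕ) then
                q ^ (min ((k:ℕ)-1) (n-(k:ℕ)-1)) * (q^2 + 1)
              else 0))
        = ∑ j : Fin (n+1), (q ^ expE n (i:ℕ) (j:ℕ) * (if (j:ℕ) = (k:ℕ) then d else 0)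
            + q ^ expE n (i:ℕ) (j:ℕ) * (if (j:ℕ) + 1 = (k:ℕ) then c else 0)
            + q ^ expE n (i:ℕ) (j:ℕ) * (if (k:ℕ) + 1 = (j:ℕ) then c else 0)) := by
          refine Finset.sum_congr rfl fun j _ => ?_
          rw [hf j]; ring
      _ = (∑ j : Fin (n+1), q ^ expE n (i:ℕ) (j:ℕ) * (if (j:ℕ) = (k:ℕ) then d else 0))
            + (∑ j : Fin (n+1), q ^ expE n (i:ℕ) (j:ℕ) * (if (j:ℕ) + 1 = (k:ℕ) then c else 0))
            + (∑ j : Fin (n+1), q ^ expE n (i:ℕ) (j:ℕ) * (if (k:ℕ) + 1 = (j:ℕ) then c else 0)) := by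
          rw [Finset.sum_add_distrib, Finset.sum_add_distrib]
      _ = q ^ expE n (i:ℕ) (k:ℕ) * d
            + (if 1 ≤ (k:ℕ) then q ^ expE n (i:ℕ) ((k:ℕ)-1) * c else 0)
            + (if (k:ℕ) + 1 ≤ n then q ^ expE n (i:ℕ) ((k:ℕ)+1) * c else 0) := by
          congr 1
          congr 1
          · -- S1
            rw [Finset.sum_eq_single k]
            · rw [if_pos rfl]
            · intro j _ hj
              rw [if_neg (fun h => hj (Fin.ext h)), mul_zero]
            · intro h; exact absurd (Finset.mem_univ k) h
          · -- S2
            by_cases hk1 : 1 ≤ (k:ℕ)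
            · rw [if_pos hk1]
              rw [Finset.sum_eq_single (⟨(k:ℕ)-1, by omega⟩ : Fin (n+1))]
              · show q ^ expE n (i:ℕ) ((k:ℕ)-1) * (if ((k:ℕ)-1) + 1 = (k:ℕ) then c else 0) = _
                rw [if_pos (by omega)]
              · intro j _ hj
                rw [if_neg, mul_zero]
                intro h
                apply hj
                apply Fin.ext
                show (j:ℕ) = (k:ℕ)-1
                omega
              · intro h; exact absurd (Finset.mem_univ _) h
            · rw [if_neg hk1]
              apply Finset.sum_eq_zero
              intro j _
              rw [if_neg (by omega), mul_zero]
          · -- S3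
            by_cases hk2 : (k:ℕ) + 1 ≤ n
            · rw [if_pos hk2]
              rw [Finset.sum_eq_single (⟨(k:ℕ)+1, by omega⟩ : Fin (n+1))]
              · show q ^ expE n (i:ℕ) ((k:ℕ)+1) * (if (k:ℕ) + 1 = ((k:ℕ)+1) then c else 0) = _
                rw [if_pos rfl]
              · intro j _ hj
                rw [if_neg, mul_zero]
                intro h
                apply hj
                apply Fin.ext
                show (j:ℕ) = (k:ℕ)+1
                omega
              · intro h; exact absurd (Finset.mem_univ _) h
            · rw [if_neg hk2]
              apply Finset.sum_eq_zero
              intro j _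
              rw [if_neg (by omega), mul_zero]
      _ = (if i = k then 1 else 0) * (q ^ n * (q - 1/q)) := by
          rw [hc, hd, hqdef]
          rw [key p n (i:ℕ) (k:ℕ) hp0 hn (by have := i.isLt; omega) (by have := k.isLt; omega)]
          by_cases hik : i = k
          · rw [if_pos (by exact_mod_cast congrArg Fin.val hik), if_pos hik, one_mul]
          · rw [if_neg (fun h => hik (Fin.ext h)), if_neg hik, zero_mul]
  exact ⟨h1, mul_eq_one_comm.mp h1⟩
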